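/- arXiv:1802.02705 — 3 statements merged into one kernel-verified Lean document; each statement's English description precedes it below -/
import Mathlib

section
/- Let R be a commutative ring of prime characteristic p, 𝔞 an ideal of R, and k, l ∈ ℕ. Then 𝔞^[k+l] ⊆ 𝔞^[k] · 𝔞^[l], and equality holds if k and l add without carrying in base p (i.e., the sum of corresponding base-p digits of k and l is always less than p). -/
open scoped BigOperators

/-- The `q`-th bracket power of an ideal: the ideal generated by `q`-th powers
of elements of `a`. -/
def bracketPow {R : Type*} [CommRing R] (a : Ideal R) (q : ℕ) : Ideal R :=
  Ideal.span ((fun x => x ^ q) '' (a : Set R))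

/-- The generalized `k`-th Frobenius power of an ideal, defined via the base-`p`
digits of `k`:  `𝔞^[k] = ∏ᵢ (𝔞^[pⁱ])^(kᵢ)` where `kᵢ = k / pⁱ % p` is the `i`-th
base-`p` digit of `k` (digits with index `> k` vanish, so the product below suffices). -/
def frobPow {R : Type*} [CommRing R] (p : ℕ) (a : Ideal R) (k : ℕ) : Ideal R :=
  ∏ i ∈ Finset.range (k + 1), bracketPow a (p ^ i) ^ (k / p ^ i % p)

lemma bracketPow_one {R : Type*} [CommRing R] (a : Ideal R) : bracketPow a 1 = a := by
  simp [bracketPow, Ideal.span_eq]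

lemma bracketPow_le_pow {R : Type*} [CommRing R] (a : Ideal R) (q : ℕ) :
    bracketPow a q ≤ a ^ q := by
  rw [bracketPow, Ideal.span_le]
  rintro _ ⟨x, hx, rfl⟩
  exact Ideal.pow_mem_pow hx q

lemma bracketPow_span_pow {R : Type*} [CommRing R] (p : ℕ) (hp : p.Prime) [CharP R p]
    (S : Set R) (i : ℕ) :
    bracketPow (Ideal.span S) (p ^ i) = Ideal.span ((fun x => x ^ p ^ i) '' S) := by
  haveI : ExpChar R p := ExpChar.prime hp
  apply le_antisymm
  · rw [bracketPow, Ideal.span_le]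
    rintro _ ⟨y, hy, rfl⟩
    have h1 : (y : R) ^ p ^ i = iterateFrobenius R p i y := (iterateFrobenius_def p i y).symm
    have h2 : Ideal.map (iterateFrobenius R p i) (Ideal.span S) = Ideal.span ((fun x => x ^ p ^ i) '' S) := by
      rw [Ideal.map_span]
      exact congrArg Ideal.span (Set.image_congr fun x _ => iterateFrobenius_def p i x)
    show y ^ p ^ i ∈ Ideal.span ((fun x => x ^ p ^ i) '' S)
    rw [h1, ← h2]
    exact Ideal.mem_map_of_mem _ hy
  · rw [Ideal.span_le]
    rintro _ ⟨x, hx, rfl⟩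
    exact Ideal.subset_span ⟨x, Ideal.subset_span hx, rfl⟩

lemma bracketPow_bracketPow {R : Type*} [CommRing R] (p : ℕ) (hp : p.Prime) [CharP R p]
    (a : Ideal R) (i : ℕ) :
    bracketPow (bracketPow a p) (p ^ i) = bracketPow a (p ^ (i + 1)) := by
  have : bracketPow a p = Ideal.span ((fun x => x ^ p) '' (a : Set R)) := rfl
  rw [this, bracketPow_span_pow p hp, Set.image_image, bracketPow]
  congr 1
  apply Set.image_congr
  intro x _
  rw [← pow_mul, ← pow_succ']

lemma div_pow_eq_zero {p m i : ℕ} (hp : 2 ≤ p) (h : m + 1 ≤ i) : m / p ^ i = 0 := by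
  apply Nat.div_eq_of_lt
  calc m < m + 1 := Nat.lt_succ_self m
    _ ≤ i := h
    _ < 2 ^ i := Nat.lt_two_pow_self
    _ ≤ p ^ i := Nat.pow_le_pow_left hp i

lemma frobPow_eq_prod {R : Type*} [CommRing R] (p : ℕ) (hp : 2 ≤ p) (a : Ideal R)
    (m N : ℕ) (hN : m + 1 ≤ N) :
    frobPow p a m = ∏ i ∈ Finset.range N, bracketPow a (p ^ i) ^ (m / p ^ i % p) := by
  rw [frobPow]
  apply Finset.prod_subset
  · exact Finset.range_subset_range.2 hN
  · intro i _ hi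
    rw [Finset.mem_range, not_lt] at hi
    rw [div_pow_eq_zero hp hi, Nat.zero_mod, pow_zero]

lemma frobPow_zero {R : Type*} [CommRing R] (p : ℕ) (a : Ideal R) : frobPow p a 0 = 1 := by
  simp [frobPow]

lemma frobPow_rec {R : Type*} [CommRing R] (p : ℕ) (hp : p.Prime) [CharP R p]
    (a : Ideal R) (m : ℕ) :
    frobPow p a m = a ^ (m % p) * frobPow p (bracketPow a p) (m / p) := by
  have h2 : 2 ≤ p := hp.two_le
  rcases Nat.eq_zero_or_pos m with rfl | hm
  · simp [frobPow_zero, frobPow, bracketPow_one]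
  · rw [frobPow, Finset.prod_range_succ']
    have h0 : bracketPow a (p ^ 0) ^ (m / p ^ 0 % p) = a ^ (m % p) := by
      simp [bracketPow_one]
    rw [h0, mul_comm]
    congr 1
    have hlt : m / p + 1 ≤ m := Nat.div_lt_self hm hp.one_lt
    rw [frobPow_eq_prod p h2 (bracketPow a p) (m / p) m hlt]
    apply Finset.prod_congr rfl
    intro i _
    rw [bracketPow_bracketPow p hp]
    congr 1
    rw [Nat.div_div_eq_div_mul, ← pow_succ']

lemma frobPow_one {R : Type*} [CommRing R] (p : ℕ) (hp : p.Prime) [CharP R p]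
    (a : Ideal R) : frobPow p a 1 = a := by
  rw [frobPow_rec p hp, Nat.mod_eq_of_lt hp.one_lt, Nat.div_eq_of_lt hp.one_lt,
    frobPow_zero, pow_one, mul_one]

lemma frobPow_add_le {R : Type*} [CommRing R] (p : ℕ) (hp : p.Prime) [CharP R p] :
    ∀ n (a : Ideal R) (k l : ℕ), k + l ≤ n →
      frobPow p a (k + l) ≤ frobPow p a k * frobPow p a l := by
  intro n
  induction n with
  | zero =>
    intro a k l hkl
    have hk : k = 0 := by omega
    have hl : l = 0 := by omega
    subst hk; subst hl
    simp [frobPow_zero]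
  | succ n ih =>
    intro a k l hkl
    rcases Nat.eq_zero_or_pos (k + l) with h0 | hpos
    · have hk : k = 0 := by omega
      have hl : l = 0 := by omega
      subst hk; subst hl
      simp [frobPow_zero]
    · have h2 : 2 ≤ p := hp.two_le
      have hkp := Nat.mod_lt k hp.pos
      have hlp := Nat.mod_lt l hp.pos
      have hdivlt : (k + l) / p < k + l := Nat.div_lt_self hpos hp.one_lt
      rw [frobPow_rec p hp a (k + l), frobPow_rec p hp a k, frobPow_rec p hp a l]
      set b := bracketPow a p with hb
      have hdiv := Nat.add_div (a := k) (b := l) hp.pos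
      by_cases hc : p ≤ k % p + l % p
      · have hmod : (k + l) % p = k % p + l % p - p := by
          rw [Nat.add_mod, Nat.mod_eq_sub_mod hc, Nat.mod_eq_of_lt (by omega)]
        have hq : (k + l) / p = k / p + l / p + 1 := by rw [hdiv, if_pos hc]
        have hn1 : k / p + l / p + 1 ≤ n := by omega
        have h1 : frobPow p b ((k + l) / p) ≤
            frobPow p b (k / p) * frobPow p b (l / p) * b := by
          rw [hq]
          calc frobPow p b (k / p + l / p + 1)
              ≤ frobPow p b (k / p + l / p) * frobPow p b 1 :=
                ih b (k / p + l / p) 1 hn1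
            _ ≤ frobPow p b (k / p) * frobPow p b (l / p) * frobPow p b 1 :=
                Ideal.mul_mono_left (ih b (k / p) (l / p) (by omega))
            _ = frobPow p b (k / p) * frobPow p b (l / p) * b := by
                rw [frobPow_one p hp]
        calc a ^ ((k + l) % p) * frobPow p b ((k + l) / p)
            ≤ a ^ ((k + l) % p) * (frobPow p b (k / p) * frobPow p b (l / p) * a ^ p) :=
              Ideal.mul_mono_right (h1.trans (Ideal.mul_mono_right (bracketPow_le_pow a p)))
          _ = (a ^ ((k + l) % p) * a ^ p) * (frobPow p b (k / p) * frobPow p b (l / p)) := by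
              ring
          _ = (a ^ (k % p) * a ^ (l % p)) * (frobPow p b (k / p) * frobPow p b (l / p)) := by
              rw [hmod, ← pow_add, ← pow_add, Nat.sub_add_cancel hc]
          _ = a ^ (k % p) * frobPow p b (k / p) * (a ^ (l % p) * frobPow p b (l / p)) := by
              ring
      · push_neg at hc
        have hmod : (k + l) % p = k % p + l % p := by
          rw [Nat.add_mod, Nat.mod_eq_of_lt hc]
        have hq : (k + l) / p = k / p + l / p := by
          rw [hdiv, if_neg (not_le.2 hc), add_zero]
        calc a ^ ((k + l) % p) * frobPow p b ((k + l) / p)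
            ≤ a ^ ((k + l) % p) * (frobPow p b (k / p) * frobPow p b (l / p)) := by
              apply Ideal.mul_mono_right
              rw [hq]
              exact ih b (k / p) (l / p) (by omega)
          _ = a ^ (k % p) * frobPow p b (k / p) * (a ^ (l % p) * frobPow p b (l / p)) := by
              rw [hmod, pow_add]
              ring

theorem stmt_4 {R : Type*} [CommRing R] (p : ℕ) (hp : p.Prime) [CharP R p]
    (a : Ideal R) (k l : ℕ) :
    frobPow p a (k + l) ≤ frobPow p a k * frobPow p a l ∧
      ((∀ i, k / p ^ i % p + l / p ^ i % p < p) →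
        frobPow p a (k + l) = frobPow p a k * frobPow p a l) := by
  have h2 : 2 ≤ p := hp.two_le
  constructor
  · exact frobPow_add_le p hp (k + l) a k l le_rfl
  · intro h
    have hdiv : ∀ i, (k + l) / p ^ i = k / p ^ i + l / p ^ i := by
      intro i
      induction i with
      | zero => simp
      | succ i ih =>
        rw [pow_succ, ← Nat.div_div_eq_div_mul, ← Nat.div_div_eq_div_mul,
          ← Nat.div_div_eq_div_mul, ih, Nat.add_div hp.pos, if_neg (not_le.2 (h i)), add_zero]
    rw [frobPow_eq_prod p h2 a (k + l) (k + l + 1) le_rfl,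
      frobPow_eq_prod p h2 a k (k + l + 1) (by omega),
      frobPow_eq_prod p h2 a l (k + l + 1) (by omega), ← Finset.prod_mul_distrib]
    apply Finset.prod_congr rfl
    intro i _
    rw [← pow_add]
    congr 1
    rw [hdiv i, Nat.add_mod, Nat.mod_eq_of_lt (h i)]
end

section
/- Let R be a commutative ring of prime characteristic p and 𝔞 an ideal of R generated by m elements. Then for every power q of p and every integer k with 0 ≤ k < q, one has 𝔞^{(m−1)(q−1)/(p−1)} · 𝔞^k = 𝔞^{(m−1)(q−1)/(p−1)} · 𝔞^[k], where 𝔞^[k] denotes the generalized Frobenius power. -/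
open scoped BigOperators

section aux
open Pointwise
variable {R : Type*} [CommRing R]

lemma prod_mem_pow_card (a : Ideal R) {ι : Type*} [DecidableEq ι] (t : Finset ι) (f : ι → R)
    (h : ∀ i ∈ t, f i ∈ a) : (∏ i ∈ t, f i) ∈ a ^ t.card := by
  induction t using Finset.induction with
  | empty => simp
  | insert x s hx ih =>
    rw [Finset.prod_insert hx, Finset.card_insert_of_notMem hx, pow_succ]
    exact mul_comm (f x) _ ▸ Ideal.mul_mem_mul
      (ih fun i hi => h i (Finset.mem_insert_of_mem hi))
      (h x (Finset.mem_insert_self x s))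

lemma pigeon {m : ℕ} (g : Fin m → R) (q : ℕ) (hq : 1 ≤ q) :
    (Ideal.span (Set.range g)) ^ ((m - 1) * (q - 1) + q) ≤
      Ideal.span (Set.range fun j => g j ^ q) *
        (Ideal.span (Set.range g)) ^ ((m - 1) * (q - 1)) := by
  set a := Ideal.span (Set.range g) with ha
  set N := (m - 1) * (q - 1) + q with hN
  have hsp : Ideal.span (Set.range g) ^ N = Ideal.span (Set.range g ^ N) :=
    Submodule.span_pow _ _
  rw [ha, hsp, Ideal.span_le]
  rintro x hx
  rw [SetLike.mem_coe]
  rw [Set.mem_pow] at hx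
  obtain ⟨f, hf⟩ := hx
  rw [List.prod_ofFn] at hf
  choose F hF using fun i => (f i).2
  have hcount : ∃ j ∈ (Finset.univ : Finset (Fin m)), q - 1 <
      (Finset.univ.filter fun i : Fin N => F i = j).card := by
    apply Finset.exists_lt_card_fiber_of_mul_lt_card_of_maps_to
      (fun i _ => Finset.mem_univ (F i))
    simp only [Finset.card_univ, Fintype.card_fin]
    rcases Nat.eq_zero_or_pos m with rfl | hm
    · simp only [hN]; omega
    · obtain ⟨m', rfl⟩ := Nat.exists_eq_add_of_le hm
      have : (1 + m' - 1) * (q - 1) = m' * (q - 1) := by congr 1; omega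
      rw [this] at hN
      calc (1 + m') * (q - 1) = m' * (q - 1) + (q - 1) := by ring
        _ < N := by omega
  obtain ⟨j, -, hj⟩ := hcount
  set s' := Finset.univ.filter fun i : Fin N => F i = j with hs'
  have hcard : q ≤ s'.card := by omega
  have hsplit : (∏ i : Fin N, (f i : R)) =
      (∏ i ∈ s', (f i : R)) * ∏ i ∈ Finset.univ.filter (fun i : Fin N => ¬ F i = j), (f i : R) :=
    (Finset.prod_filter_mul_prod_filter_not _ _ _).symm
  have hfib : (∏ i ∈ s', (f i : R)) = g j ^ s'.card := by
    rw [← Finset.prod_const]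
    apply Finset.prod_congr rfl
    intro i hi
    rw [hs', Finset.mem_filter] at hi
    rw [← hF i, hi.2]
  have hgj : g j ∈ a := Ideal.subset_span ⟨j, rfl⟩
  have hrest : (∏ i ∈ Finset.univ.filter (fun i : Fin N => ¬ F i = j), (f i : R)) ∈
      a ^ (Finset.univ.filter (fun i : Fin N => ¬ F i = j)).card := by
    apply prod_mem_pow_card
    intro i _
    rw [← hF i]
    exact Ideal.subset_span ⟨F i, rfl⟩
  set c2 := (Finset.univ.filter (fun i : Fin N => ¬ F i = j)).card with hc2
  have hsum : s'.card + c2 = N := by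
    rw [hs', hc2, Finset.card_filter_add_card_filter_not, Finset.card_univ,
      Fintype.card_fin]
  have key : x = (g j ^ q) * (g j ^ (s'.card - q) *
      ∏ i ∈ Finset.univ.filter (fun i : Fin N => ¬ F i = j), (f i : R)) := by
    rw [← hf, hsplit, hfib, ← mul_assoc, ← pow_add]
    congr 2
    omega
  rw [key]
  refine Ideal.mul_mem_mul (Ideal.subset_span ⟨j, rfl⟩) ?_
  have : (s'.card - q) + c2 = (m - 1) * (q - 1) := by omega
  rw [← this, pow_add]
  exact Ideal.mul_mem_mul (Ideal.pow_mem_pow hgj _) hrest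

lemma bracket_le_pow (a : Ideal R) (q : ℕ) : bracketPow a q ≤ a ^ q := by
  rw [bracketPow, Ideal.span_le]
  rintro x ⟨y, hy, rfl⟩
  exact Ideal.pow_mem_pow hy q

lemma key_one {m : ℕ} (g : Fin m → R) (a : Ideal R) (hg : a = Ideal.span (Set.range g))
    (q c : ℕ) (hq : 1 ≤ q) (hc : (m - 1) * (q - 1) ≤ c) :
    a ^ c * a ^ q = a ^ c * bracketPow a q := by
  apply le_antisymm
  · have h1 : a ^ ((m - 1) * (q - 1)) * a ^ q ≤ bracketPow a q * a ^ ((m - 1) * (q - 1)) := by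
      rw [← pow_add]
      refine le_trans (hg ▸ pigeon g q hq) (Ideal.mul_mono_left ?_)
      rw [Ideal.span_le]
      rintro x ⟨j, rfl⟩
      exact Ideal.subset_span ⟨g j, hg ▸ Ideal.subset_span ⟨j, rfl⟩, rfl⟩
    calc a ^ c * a ^ q = a ^ (c - (m - 1) * (q - 1)) * (a ^ ((m - 1) * (q - 1)) * a ^ q) := by
          have h : c = c - (m - 1) * (q - 1) + (m - 1) * (q - 1) := (Nat.sub_add_cancel hc).symm
          conv_lhs => rw [h, pow_add, mul_assoc]
      _ ≤ a ^ (c - (m - 1) * (q - 1)) * (bracketPow a q * a ^ ((m - 1) * (q - 1))) :=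
          Ideal.mul_mono_right h1
      _ = a ^ c * bracketPow a q := by
          rw [mul_comm (bracketPow a q), ← mul_assoc, ← pow_add, Nat.sub_add_cancel hc]
  · exact Ideal.mul_mono_right (bracket_le_pow a q)

lemma key_pow {m : ℕ} (g : Fin m → R) (a : Ideal R) (hg : a = Ideal.span (Set.range g))
    (q c : ℕ) (hq : 1 ≤ q) (hc : (m - 1) * (q - 1) ≤ c) (t : ℕ) :
    a ^ c * a ^ (q * t) = a ^ c * bracketPow a q ^ t := by
  induction t with
  | zero => simp
  | succ t ih =>
    calc a ^ c * a ^ (q * (t + 1)) = (a ^ c * a ^ q) * a ^ (q * t) := by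
          rw [mul_assoc, ← pow_add]; congr 2; ring
      _ = (a ^ c * bracketPow a q) * a ^ (q * t) := by rw [key_one g a hg q c hq hc]
      _ = bracketPow a q * (a ^ c * a ^ (q * t)) := by ring
      _ = bracketPow a q * (a ^ c * bracketPow a q ^ t) := by rw [ih]
      _ = a ^ c * bracketPow a q ^ (t + 1) := by ring

lemma main_aux {m : ℕ} (g : Fin m → R) (a : Ideal R) (hg : a = Ideal.span (Set.range g))
    (p : ℕ) (hp : 1 ≤ p) (s : Finset ℕ) (t : ℕ → ℕ) :
    a ^ ((m - 1) * ∑ i ∈ s, p ^ i) * ∏ i ∈ s, a ^ (p ^ i * t i) =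
      a ^ ((m - 1) * ∑ i ∈ s, p ^ i) * ∏ i ∈ s, bracketPow a (p ^ i) ^ t i := by
  induction s using Finset.induction with
  | empty => simp
  | insert j s hx ih =>
    rw [Finset.sum_insert hx, Finset.prod_insert hx, Finset.prod_insert hx]
    have hq : 1 ≤ p ^ j := Nat.one_le_pow _ _ hp
    have hc : (m - 1) * (p ^ j - 1) ≤ (m - 1) * p ^ j :=
      Nat.mul_le_mul_left _ (Nat.sub_le _ _)
    calc a ^ ((m - 1) * (p ^ j + ∑ i ∈ s, p ^ i)) * (a ^ (p ^ j * t j) * ∏ i ∈ s, a ^ (p ^ i * t i))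
        = (a ^ ((m - 1) * p ^ j) * a ^ (p ^ j * t j)) *
          (a ^ ((m - 1) * ∑ i ∈ s, p ^ i) * ∏ i ∈ s, a ^ (p ^ i * t i)) := by
          rw [Nat.mul_add, pow_add]; ring
      _ = (a ^ ((m - 1) * p ^ j) * bracketPow a (p ^ j) ^ t j) *
          (a ^ ((m - 1) * ∑ i ∈ s, p ^ i) * ∏ i ∈ s, bracketPow a (p ^ i) ^ t i) := by
          rw [key_pow g a hg _ _ hq hc, ih]
      _ = a ^ ((m - 1) * (p ^ j + ∑ i ∈ s, p ^ i)) *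
          (bracketPow a (p ^ j) ^ t j * ∏ i ∈ s, bracketPow a (p ^ i) ^ t i) := by
          rw [Nat.mul_add, pow_add]; ring

lemma digit_sum (p : ℕ) (hp : 2 ≤ p) (k n : ℕ) (hk : k < p ^ n) :
    ∑ i ∈ Finset.range n, k / p ^ i % p * p ^ i = k := by
  have H : ∀ n : ℕ, ∑ i ∈ Finset.range n, k / p ^ i % p * p ^ i = k % p ^ n := by
    intro n
    induction n with
    | zero => simp [Nat.mod_one]
    | succ n ih =>
      rw [Finset.sum_range_succ, ih]
      have h1 : k % p ^ (n + 1) % p ^ n = k % p ^ n :=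
        Nat.mod_mod_of_dvd _ (pow_dvd_pow p (Nat.le_succ n))
      have h2 : k % p ^ (n + 1) / p ^ n = k / p ^ n % p := by
        rw [pow_succ]; exact Nat.mod_mul_right_div_self k (p ^ n) p
      have := Nat.div_add_mod (k % p ^ (n + 1)) (p ^ n)
      rw [h1, h2, Nat.mul_comm (p ^ n)] at this
      omega
  rw [H n, Nat.mod_eq_of_lt hk]

lemma frobPow_eq_range (p : ℕ) (hp : 2 ≤ p) (a : Ideal R) (k n : ℕ) (hk : k < p ^ n) :
    frobPow p a k = ∏ i ∈ Finset.range n, bracketPow a (p ^ i) ^ (k / p ^ i % p) := by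
  have big : ∀ r : ℕ, (∀ i, r ≤ i → k / p ^ i % p = 0) → Finset.range r ⊆ Finset.range (max (k + 1) n) →
      (∏ i ∈ Finset.range r, bracketPow a (p ^ i) ^ (k / p ^ i % p)) =
      ∏ i ∈ Finset.range (max (k + 1) n), bracketPow a (p ^ i) ^ (k / p ^ i % p) := by
    intro r hzero hsub
    apply Finset.prod_subset hsub
    intro i _ hi
    rw [Finset.mem_range, not_lt] at hi
    rw [hzero i hi, pow_zero]
  rw [frobPow]
  rw [big (k + 1) (fun i hi => by
      have : k < p ^ i := lt_of_lt_of_le (lt_of_lt_of_le (Nat.lt_two_pow_self (n := k))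
        (Nat.pow_le_pow_left hp k)) (Nat.pow_le_pow_right (by omega) (by omega))
      rw [Nat.div_eq_of_lt this]; simp)
    (Finset.range_subset_range.mpr (le_max_left _ _)),
    big n (fun i hi => by
      have : k < p ^ i := lt_of_lt_of_le hk (Nat.pow_le_pow_right (by omega) hi)
      rw [Nat.div_eq_of_lt this]; simp)
    (Finset.range_subset_range.mpr (le_max_right _ _))]

end aux


/-- Here `∑_{i<e} pⁱ = (q−1)/(p−1)` for `q = p^e`. -/
theorem stmt_11 {R : Type*} [CommRing R] (p : ℕ) (hp : p.Prime) [CharP R p]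
    (m : ℕ) (a : Ideal R) (g : Fin m → R) (hg : a = Ideal.span (Set.range g))
    (e k : ℕ) (hk : k < p ^ e) :
    a ^ ((m - 1) * ∑ i ∈ Finset.range e, p ^ i) * a ^ k =
      a ^ ((m - 1) * ∑ i ∈ Finset.range e, p ^ i) * frobPow p a k := by
  have hp2 : 2 ≤ p := hp.two_le
  rw [frobPow_eq_range p hp2 a k e hk]
  have hk' : a ^ k = ∏ i ∈ Finset.range e, a ^ (p ^ i * (k / p ^ i % p)) := by
    conv_lhs => rw [← digit_sum p hp2 k e hk]
    rw [← Finset.prod_pow_eq_pow_sum]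
    apply Finset.prod_congr rfl
    intro i _
    rw [Nat.mul_comm (p ^ i) (k / p ^ i % p)]
  rw [hk']
  exact main_aux g a hg p (by omega) (Finset.range e) (fun i => k / p ^ i % p)
end

section
/- Let R be a regular F-finite domain of prime characteristic p, and let 𝔞 and 𝔟 be ideals of R. Then for every power q of p, the ideal (𝔞 · 𝔟^[q])^[1/q] equals 𝔞^[1/q] · 𝔟, where for an ideal 𝔠, 𝔠^[1/q] is the smallest ideal 𝔡 such that 𝔠 ⊆ 𝔡^[q]. -/
open scoped BigOperators

/-- The `q`-th Frobenius root `𝔠^[1/q]`: the smallest ideal `𝔡` with `𝔠 ⊆ 𝔡^[q]`.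
(Over a regular F-finite domain the infimum below is itself such an ideal, by
flatness of Frobenius, so it is indeed the smallest one.) -/
def frobRoot {R : Type*} [CommRing R] (q : ℕ) (c : Ideal R) : Ideal R :=
  sInf {d : Ideal R | c ≤ bracketPow d q}

section Helpers

variable {R S : Type*} [CommRing R] [CommRing S]

/-- Flat + finite over a Noetherian ring ⇒ `Ideal.map` commutes with arbitrary infima
(the nontrivial inclusion): since `S` is then a finitely presented flat, hence projective,
`R`-module, coordinates of elements of `I • S` lie in `I`. -/
theorem iInf_map_le_map_sInf [IsNoetherianRing R]
    (f : R →+* S) (hfl : f.Flat) (hfin : f.Finite) (T : Set (Ideal R)) :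
    (⨅ I ∈ T, Ideal.map f I) ≤ Ideal.map f (sInf T) := by
  letI := f.toAlgebra
  haveI : Module.Flat R S := hfl
  haveI : Module.Finite R S := hfin
  haveI : Module.FinitePresentation R S := Module.finitePresentation_of_finite R S
  haveI hproj : Module.Projective R S := Module.freeLocus_eq_univ_iff.mp Module.freeLocus_eq_univ
  obtain ⟨s, hs⟩ := Module.projective_def'.mp hproj
  intro x hx
  simp only [Submodule.mem_iInf] at hx
  have hmem : ∀ I ∈ T, x ∈ I • (⊤ : Submodule R S) := by
    intro I hI
    rw [Ideal.smul_top_eq_map, Submodule.restrictScalars_mem, RingHom.algebraMap_toAlgebra]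
    exact hx I hI
  have hcoef : ∀ m, s x m ∈ sInf T := by
    intro m
    rw [Ideal.mem_sInf]
    intro I hI
    have h2 : ((Finsupp.lapply m).comp s) x ∈
        Submodule.map ((Finsupp.lapply m).comp s) (I • (⊤ : Submodule R S)) :=
      Submodule.mem_map_of_mem (hmem I hI)
    rw [Submodule.map_smul''] at h2
    have h3 : I • Submodule.map ((Finsupp.lapply m).comp s) ⊤ ≤ I • (⊤ : Submodule R R) :=
      smul_mono_right _ le_top
    have h4 : I • (⊤ : Submodule R R) ≤ I :=
      Submodule.smul_le.mpr fun r hr n _ => by simpa [smul_eq_mul] using I.mul_mem_right n hr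
    exact h4 (h3 h2)
  have hx' : Finsupp.linearCombination R id (s x) = x := DFunLike.congr_fun hs x
  have hmem2 : x ∈ (sInf T) • (⊤ : Submodule R S) := by
    rw [← hx', Finsupp.linearCombination_apply]
    exact Submodule.sum_mem _ fun m _ => Submodule.smul_mem_smul (hcoef m) Submodule.mem_top
  rwa [Ideal.smul_top_eq_map, Submodule.restrictScalars_mem, RingHom.algebraMap_toAlgebra]
    at hmem2

theorem map_inf_of_flat [IsNoetherianRing R]
    (f : R →+* S) (hfl : f.Flat) (hfin : f.Finite) (c d : Ideal R) :
    Ideal.map f (c ⊓ d) = Ideal.map f c ⊓ Ideal.map f d := by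
  refine le_antisymm (le_inf (Ideal.map_mono inf_le_left) (Ideal.map_mono inf_le_right)) ?_
  have h := iInf_map_le_map_sInf f hfl hfin {c, d}
  rw [sInf_pair] at h
  refine le_trans (le_of_eq ?_) h
  rw [iInf_pair]

theorem span_singleton_mul_cancel [IsDomain S] {x : S} (hx : x ≠ 0) {D D' : Ideal S}
    (h : Ideal.span {x} * D = Ideal.span {x} * D') : D = D' := by
  have key : ∀ {E E' : Ideal S}, Ideal.span {x} * E = Ideal.span {x} * E' → E ≤ E' := by
    intro E E' hEE' d hd
    have : x * d ∈ Ideal.span {x} * E' := by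
      rw [← hEE']
      exact Ideal.mem_span_singleton_mul.mpr ⟨d, hd, rfl⟩
    obtain ⟨z, hz, hxz⟩ := Ideal.mem_span_singleton_mul.mp this
    rwa [← mul_left_cancel₀ hx hxz]
  exact le_antisymm (key h) (key h.symm)

theorem span_singleton_mul_colon (c : Ideal S) (y : S) :
    Ideal.span {y} * (c.colon (Ideal.span {y})) = c ⊓ Ideal.span {y} := by
  apply le_antisymm
  · intro z hz
    obtain ⟨w, hw, rfl⟩ := Ideal.mem_span_singleton_mul.mp hz
    refine ⟨?_, Ideal.mul_mem_right w _ (Ideal.mem_span_singleton_self y)⟩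
    have := Submodule.mem_colon.mp hw y (Ideal.mem_span_singleton_self y)
    simpa [smul_eq_mul, mul_comm] using this
  · rintro z ⟨hzc, hzy⟩
    obtain ⟨w, rfl⟩ := Ideal.mem_span_singleton'.mp hzy
    refine Ideal.mem_span_singleton_mul.mpr ⟨w, ?_, mul_comm y w⟩
    rw [Submodule.mem_colon]
    intro pp hpp
    obtain ⟨t, rfl⟩ := Ideal.mem_span_singleton'.mp hpp
    have : (w * y) * t ∈ c := Ideal.mul_mem_right t _ hzc
    rw [smul_eq_mul]; convert this using 1; ring

theorem map_colon_of_flat [IsNoetherianRing R] [IsDomain S]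
    (f : R →+* S) (hfl : f.Flat) (hfin : f.Finite) (c : Ideal R) (y : R) (hfy : f y ≠ 0) :
    Ideal.map f (c.colon (Ideal.span {y})) = (Ideal.map f c).colon (Ideal.span {f y}) := by
  apply span_singleton_mul_cancel hfy
  have h1 : Ideal.map f (Ideal.span ({y} : Set R)) = Ideal.span {f y} := by
    rw [Ideal.map_span, Set.image_singleton]
  calc Ideal.span {f y} * Ideal.map f (c.colon (Ideal.span {y}))
      = Ideal.map f (Ideal.span {y} * c.colon (Ideal.span {y})) := by
        rw [Ideal.map_mul, h1]
    _ = Ideal.map f (c ⊓ Ideal.span {y}) := by rw [span_singleton_mul_colon]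
    _ = Ideal.map f c ⊓ Ideal.span {f y} := by rw [map_inf_of_flat f hfl hfin, h1]
    _ = Ideal.span {f y} * (Ideal.map f c).colon (Ideal.span {f y}) := by
        rw [span_singleton_mul_colon]

theorem bracketPow_eq_map (p : ℕ) [ExpChar R p] (c : Ideal R) (e : ℕ) :
    bracketPow c (p ^ e) = Ideal.map (iterateFrobenius R p e) c := rfl

theorem iterateFrobenius_flat (p : ℕ) [ExpChar R p] (hreg : (frobenius R p).Flat) (e : ℕ) :
    (iterateFrobenius R p e).Flat := by
  induction e with
  | zero => rw [iterateFrobenius_zero]; exact RingHom.Flat.id R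
  | succ n ih =>
    haveI := hreg
    haveI := ih
    rw [show n + 1 = 1 + n from add_comm n 1, iterateFrobenius_add, iterateFrobenius_one]
    exact RingHom.Flat.comp ih hreg

theorem iterateFrobenius_finite (p : ℕ) [ExpChar R p] (hfin : (frobenius R p).Finite) (e : ℕ) :
    (iterateFrobenius R p e).Finite := by
  induction e with
  | zero => rw [iterateFrobenius_zero]; exact RingHom.Finite.id R
  | succ n ih =>
    rw [show n + 1 = 1 + n from add_comm n 1, iterateFrobenius_add, iterateFrobenius_one]
    exact RingHom.Finite.comp hfin ih

end Helpers

/-- Over a regular F-finite domain (regularity encoded, via Kunz's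
theorem, by flatness of the Frobenius, and F-finiteness by its finiteness),
`(𝔞 · 𝔟^[q])^[1/q] = 𝔞^[1/q] · 𝔟` for every power `q` of `p`. -/
theorem stmt_12 {R : Type*} [CommRing R] [IsDomain R] [IsNoetherianRing R]
    (p : ℕ) [Fact p.Prime] [CharP R p]
    (hFfin : (frobenius R p).Finite) (hreg : (frobenius R p).Flat)
    (a b : Ideal R) (e : ℕ) :
    frobRoot (p ^ e) (a * bracketPow b (p ^ e)) = frobRoot (p ^ e) a * b := by
  haveI : ExpChar R p := ExpChar.prime (Fact.out)
  set q := p ^ e with hq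
  set φ := iterateFrobenius R p e with hφ
  have hbp : ∀ c : Ideal R, bracketPow c q = Ideal.map φ c := fun c => bracketPow_eq_map p c e
  have hflat : φ.Flat := iterateFrobenius_flat p hreg e
  have hfin : φ.Finite := iterateFrobenius_finite p hFfin e
  -- every ideal is contained in the bracket power of its Frobenius root
  have hroot : ∀ c : Ideal R, c ≤ bracketPow (frobRoot q c) q := by
    intro c
    have h1 : c ≤ ⨅ d ∈ {d : Ideal R | c ≤ bracketPow d q}, Ideal.map φ d :=
      le_iInf₂ fun d hd => (hbp d) ▸ hd
    refine le_trans h1 (le_trans (iInf_map_le_map_sInf φ hflat hfin _) ?_)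
    rw [hbp]
    exact le_rfl
  apply le_antisymm
  · -- `frobRoot q a * b` belongs to the defining set
    apply sInf_le
    show a * bracketPow b q ≤ bracketPow (frobRoot q a * b) q
    rw [hbp (frobRoot q a * b), Ideal.map_mul, ← hbp (frobRoot q a), ← hbp b]
    exact Ideal.mul_mono (hroot a) le_rfl
  · apply le_sInf
    intro d hd
    rw [Ideal.mul_le]
    intro x hx y hy
    by_cases hy0 : y = 0
    · simp [hy0]
    have hfy : φ y ≠ 0 := by
      rw [hφ, iterateFrobenius_def]
      exact pow_ne_zero _ hy0
    have hkey : a ≤ bracketPow (d.colon (Ideal.span {y})) q := by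
      rw [hbp, map_colon_of_flat φ hflat hfin d y hfy]
      intro z hz
      rw [Submodule.mem_colon]
      intro pp hpp
      obtain ⟨t, rfl⟩ := Ideal.mem_span_singleton'.mp hpp
      have hyq : φ y ∈ bracketPow b q :=
        Ideal.subset_span ⟨y, hy, (iterateFrobenius_def p e y).symm⟩
      have h1 : z * φ y ∈ Ideal.map φ d := by
        rw [← hbp]
        exact hd (Ideal.mul_mem_mul hz hyq)
      have h2 : (z * φ y) * t ∈ Ideal.map φ d := Ideal.mul_mem_right t _ h1
      simpa [smul_eq_mul, mul_comm, mul_left_comm, mul_assoc] using h2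
    have hcolon_mem : d.colon (Ideal.span {y}) ∈ {d' : Ideal R | a ≤ bracketPow d' q} := hkey
    have hxd : x ∈ d.colon (Ideal.span {y}) := sInf_le hcolon_mem hx
    have := Submodule.mem_colon.mp hxd y (Ideal.mem_span_singleton_self y)
    simpa [smul_eq_mul] using this
end
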